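/- Let π ∈ ℝ^k be the uniform distribution with entries 1/k, and let m ∈ [0,1]^{(2k-1)×k} consist of 2k-1 ζ-separated rows with disjoint index sets S, T of size k-1 each and one extra index. With C_{ST} = H(m[S]) · diag(π) · H(m[T])^T (a 2^{k-1}×2^{k-1} matrix whose (A,B) entry is Σ_j π_j ∏_{i∈A∪B} m_{ij}), if π_min = min_j π_j and each row of m is ζ-separated, then σ_k(C_{ST}) > (π_min/k)·(ζ/(2√5))^{2k-2}. -/

import Mathlib

open Matrix Finset

/-- Euclidean norm of a finitely-indexed real vector. -/
noncomputable def e2 {n : Type*} [Fintype n] (x : n → ℝ) : ℝ :=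
  Real.sqrt (∑ i, x i ^ 2)

/-- The `j`-th largest singular value of a real matrix, via the Courant–Fischer
max–min characterization: the supremum over `j`-dimensional subspaces of the
infimum of `‖A x‖₂` over unit vectors `x` in the subspace. -/
noncomputable def sval {m' n : Type*} [Fintype m'] [Fintype n] (A : Matrix m' n ℝ) (j : ℕ) : ℝ :=
  ⨆ V : {V : Submodule ℝ (n → ℝ) // Module.finrank ℝ V = j},
    ⨅ x : {x : n → ℝ // x ∈ V.1 ∧ e2 x = 1}, e2 (A.mulVec x.1)

/-- Hadamard extension: rows indexed by subsets `S ⊆ [n]`, entry `(S, j)` equal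
to `∏ i ∈ S, m i j`. -/
noncomputable def hadamardExt {n k : ℕ} (m : Matrix (Fin n) (Fin k) ℝ) :
    Matrix (Finset (Fin n)) (Fin k) ℝ :=
  Matrix.of fun S j => ∏ i ∈ S, m i j

/-- The `L₂ → L₂` operator norm of a real matrix. -/
noncomputable def opN {m' n : Type*} [Fintype m'] [Fintype n] (A : Matrix m' n ℝ) : ℝ :=
  ⨆ x : {x : n → ℝ // e2 x = 1}, e2 (A.mulVec x.1)

/-! ### Auxiliary lemmas -/

lemma sum_sq_nonneg' {n : Type*} [Fintype n] (x : n → ℝ) : 0 ≤ ∑ i, x i ^ 2 :=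
  Finset.sum_nonneg fun _ _ => sq_nonneg _

lemma e2_nonneg {n : Type*} [Fintype n] (x : n → ℝ) : 0 ≤ e2 x := Real.sqrt_nonneg _

lemma e2_sq {n : Type*} [Fintype n] (x : n → ℝ) : e2 x ^ 2 = ∑ i, x i ^ 2 :=
  Real.sq_sqrt (sum_sq_nonneg' x)

lemma le_e2 {n : Type*} [Fintype n] {x : n → ℝ} {t : ℝ} (ht : 0 ≤ t)
    (h : t ^ 2 ≤ ∑ i, x i ^ 2) : t ≤ e2 x :=
  (Real.le_sqrt ht (sum_sq_nonneg' x)).2 h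

lemma e2_eq_zero {n : Type*} [Fintype n] {x : n → ℝ} (h : e2 x = 0) : x = 0 := by
  have hs : ∑ i, x i ^ 2 = 0 := (Real.sqrt_eq_zero (sum_sq_nonneg' x)).1 h
  funext i
  have h1 := (Finset.sum_eq_zero_iff_of_nonneg (fun i _ => sq_nonneg (x i))).1 hs i
    (Finset.mem_univ i)
  have := sq_eq_zero_iff.1 h1
  simpa using this

lemma e2_smul {n : Type*} [Fintype n] (a : ℝ) (x : n → ℝ) : e2 (a • x) = |a| * e2 x := by
  unfold e2
  have h : ∑ i, (a • x) i ^ 2 = a ^ 2 * ∑ i, x i ^ 2 := by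
    rw [Finset.mul_sum]; apply Finset.sum_congr rfl; intro i _; simp [smul_eq_mul]; ring
  rw [h, Real.sqrt_mul (sq_nonneg a), Real.sqrt_sq_eq_abs]

/-- Key quantitative lemma: a lower bound on the quadratic form of the Hadamard
extension of `s` ζ-separated rows, for vectors supported on `s + 1` columns. -/
lemma lemA {n k : ℕ} (m : Matrix (Fin n) (Fin k) ℝ) (ζ : ℝ) (hζ : 0 < ζ)
    (hm : ∀ i j, m i j ∈ Set.Icc (0:ℝ) 1) :
    ∀ (s : ℕ) (S : Finset (Fin n)) (J : Finset (Fin k)) (z : Fin k → ℝ),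
      S.card = s → J.card = s + 1 →
      (∀ i ∈ S, ∀ j ∈ J, ∀ j' ∈ J, j ≠ j' → ζ ≤ |m i j - m i j'|) →
      (∀ j, j ∉ J → z j = 0) →
      (ζ^2/2)^s / (s+1) * (∑ j, z j ^ 2) ≤
        ∑ A ∈ S.powerset, (∑ j, z j * ∏ i ∈ A, m i j) ^ 2 := by
  intro s
  induction s with
  | zero =>
    intro S J z hS hJ hsep hz
    rw [Finset.card_eq_zero] at hS
    obtain ⟨j₀, hj₀⟩ := Finset.card_eq_one.1 hJ
    subst hS hj₀
    have h1 : ∑ j, z j ^ 2 = z j₀ ^ 2 := by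
      apply Finset.sum_eq_single j₀
      · intro b _ hb
        rw [hz b (by simp [hb]), zero_pow] ; norm_num
      · simp
    have h2 : ∑ j, z j * ∏ i ∈ (∅ : Finset (Fin n)), m i j = z j₀ := by
      rw [Finset.sum_eq_single j₀]
      · simp
      · intro b _ hb; rw [hz b (by simp [hb]), zero_mul]
      · simp
    have h2' : ∑ x : Fin k, z x = z j₀ := by simpa using h2
    simp only [Finset.powerset_empty, Finset.sum_singleton, Finset.prod_empty, mul_one, h1, h2']
    norm_num
  | succ s ih =>
    intro S J z hS hJ hsep hz
    -- pick i ∈ S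
    have hSne : S.Nonempty := Finset.card_pos.1 (by omega)
    obtain ⟨i, hi⟩ := hSne
    set S' := S.erase i with hS'
    have hiS' : i ∉ S' := Finset.notMem_erase _ _
    have hS'card : S'.card = s := by
      rw [hS', Finset.card_erase_of_mem hi, hS]
      omega
    have hSins : S = insert i S' := by
      rw [hS', Finset.insert_erase hi]
    -- pick j₀ minimizing z j ^ 2 on J
    have hJne : J.Nonempty := Finset.card_pos.1 (by omega)
    obtain ⟨j₀, hj₀J, hj₀min⟩ := Finset.exists_min_image J (fun j => z j ^ 2) hJne
    set J' := J.erase j₀ with hJ'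
    have hJ'card : J'.card = s + 1 := by
      rw [hJ', Finset.card_erase_of_mem hj₀J, hJ]
      omega
    set w : Fin k → ℝ := fun j => (m i j - m i j₀) * z j with hw
    have hwsupp : ∀ j, j ∉ J' → w j = 0 := by
      intro j hj
      rw [hJ', Finset.mem_erase] at hj
      by_cases hjj : j = j₀
      · simp [hw, hjj]
      · have hjJ : j ∉ J := fun h => hj ⟨hjj, h⟩
        simp [hw, hz j hjJ]
    -- IH
    have hIH := ih S' J' w hS'card hJ'card
      (fun i' hi' j hj j' hj' hne => hsep i' (Finset.mem_of_mem_erase hi')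
        j (Finset.mem_of_mem_erase hj) j' (Finset.mem_of_mem_erase hj') hne)
      hwsupp
    -- (3) : ∑ w^2 ≥ ζ^2 * (s+1)/(s+2) * ∑ z^2
    have hsum_z : ∑ j, z j ^ 2 = ∑ j ∈ J, z j ^ 2 := by
      rw [← Finset.sum_subset (Finset.subset_univ J)]
      intro x _ hx; rw [hz x hx]; ring
    have hmin : ((s:ℝ)+2) * z j₀ ^ 2 ≤ ∑ j ∈ J, z j ^ 2 := by
      have := Finset.card_nsmul_le_sum J (fun j => z j ^ 2) (z j₀ ^ 2) (fun x hx => hj₀min x hx)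
      rw [hJ] at this
      convert this using 1
      · rfl
      push_cast [nsmul_eq_mul]
      ring
    have hJsplit : ∑ j ∈ J, z j ^ 2 = ∑ j ∈ J', z j ^ 2 + z j₀ ^ 2 := by
      rw [hJ', Finset.sum_erase_add J _ hj₀J]
    have h3a : ζ^2 * ∑ j ∈ J', z j ^ 2 ≤ ∑ j, w j ^ 2 := by
      have h : ∑ j, w j ^ 2 = ∑ j ∈ J', w j ^ 2 := by
        rw [← Finset.sum_subset (Finset.subset_univ J')]
        intro x _ hx; rw [hwsupp x hx]; ring
      rw [h, Finset.mul_sum]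
      apply Finset.sum_le_sum
      intro j hj
      have hjJ : j ∈ J := Finset.mem_of_mem_erase hj
      have hjne : j ≠ j₀ := Finset.ne_of_mem_erase hj
      have hsepj := hsep i hi j hjJ j₀ hj₀J hjne
      have h1 : ζ^2 ≤ (m i j - m i j₀)^2 := by
        have := sq_abs (m i j - m i j₀)
        nlinarith [abs_nonneg (m i j - m i j₀)]
      have hz2 : 0 ≤ z j ^ 2 := sq_nonneg _
      calc ζ^2 * z j ^2 ≤ (m i j - m i j₀)^2 * z j ^2 := by nlinarith
        _ = w j ^ 2 := by rw [hw]; ring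
    -- (1) : ∑_{A ⊆ S'} (H w)^2 ≤ 2 * ∑_{A ⊆ S} (H z)^2
    have h1 : ∑ A ∈ S'.powerset, (∑ j, w j * ∏ i' ∈ A, m i' j) ^ 2 ≤
        2 * ∑ A ∈ S.powerset, (∑ j, z j * ∏ i' ∈ A, m i' j) ^ 2 := by
      rw [hSins, Finset.sum_powerset_insert hiS', mul_add, Finset.mul_sum, Finset.mul_sum,
        ← Finset.sum_add_distrib]
      apply Finset.sum_le_sum
      intro A hA
      have hiA : i ∉ A := fun h => hiS' (Finset.mem_powerset.1 hA h)
      set a := ∑ j, z j * ∏ i' ∈ A, m i' j with ha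
      set b := ∑ j, z j * ∏ i' ∈ insert i A, m i' j with hb
      have hwab : ∑ j, w j * ∏ i' ∈ A, m i' j = b - m i j₀ * a := by
        rw [ha, hb, Finset.mul_sum, ← Finset.sum_sub_distrib]
        apply Finset.sum_congr rfl
        intro j _
        rw [Finset.prod_insert hiA, hw]
        ring
      rw [hwab]
      obtain ⟨hm0, hm1⟩ := hm i j₀
      have hm0sq : m i j₀ ^ 2 ≤ 1 := by nlinarith
      nlinarith [sq_nonneg (m i j₀ * a + b), sq_nonneg a, sq_nonneg b,
        mul_nonneg (sub_nonneg.2 hm0sq) (sq_nonneg a)]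
    -- combine
    have hc0 : (0:ℝ) < ζ^2/2 := by positivity
    have hcs : (0:ℝ) ≤ (ζ^2/2)^s := le_of_lt (pow_pos hc0 s)
    have hznn : (0:ℝ) ≤ ∑ j ∈ J, z j ^ 2 :=
      Finset.sum_nonneg (fun _ _ => sq_nonneg _)
    have step1 : (ζ^2/2)^s / (s+1) * (ζ^2 * ∑ j ∈ J', z j ^ 2) ≤
        2 * ∑ A ∈ S.powerset, (∑ j, z j * ∏ i' ∈ A, m i' j) ^ 2 := by
      calc (ζ^2/2)^s / (s+1) * (ζ^2 * ∑ j ∈ J', z j ^ 2)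
          ≤ (ζ^2/2)^s / (s+1) * (∑ j, w j ^ 2) := by
            apply mul_le_mul_of_nonneg_left h3a (by positivity)
        _ ≤ ∑ A ∈ S'.powerset, (∑ j, w j * ∏ i' ∈ A, m i' j) ^ 2 := hIH
        _ ≤ 2 * ∑ A ∈ S.powerset, (∑ j, z j * ∏ i' ∈ A, m i' j) ^ 2 := h1
    have hJ'ge : ((s:ℝ)+1)/((s:ℝ)+2) * ∑ j ∈ J, z j ^ 2 ≤ ∑ j ∈ J', z j ^ 2 := by
      have h2pos : (0:ℝ) < (s:ℝ) + 2 := by positivity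
      rw [div_mul_eq_mul_div, div_le_iff₀ h2pos]
      nlinarith [hmin, hJsplit]
    -- final
    rw [hsum_z]
    push_cast
    have hid : (ζ^2/2)^(s+1) / ((s:ℝ)+1+1) * (∑ j ∈ J, z j ^ 2) * 2
        = (ζ^2/2)^s / ((s:ℝ)+1) * (ζ^2 * (((s:ℝ)+1)/((s:ℝ)+2) * ∑ j ∈ J, z j ^ 2)) := by
      rw [pow_succ]
      have hs1 : ((s:ℝ)+1) ≠ 0 := by positivity
      have hs2 : ((s:ℝ)+2) ≠ 0 := by positivity
      field_simp
      ring
    have h4 : (ζ^2/2)^s / ((s:ℝ)+1) * (ζ^2 * (((s:ℝ)+1)/((s:ℝ)+2) * ∑ j ∈ J, z j ^ 2)) ≤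
        (ζ^2/2)^s / ((s:ℝ)+1) * (ζ^2 * ∑ j ∈ J', z j ^ 2) := by
      apply mul_le_mul_of_nonneg_left _ (by positivity)
      exact mul_le_mul_of_nonneg_left hJ'ge (sq_nonneg ζ)
    linarith [step1, h4, hid]

set_option maxHeartbeats 2000000 in
/-- with uniform mixing weights π_j = 1/k and disjoint sets S, T of
k-1 ζ-separated rows each, the matrix C_{ST} with (A,B) entry
Σ_j (1/k) ∏_{i∈A∪B} m_{ij} satisfies σ_k(C_{ST}) > ((1/k)/k)·(ζ/(2√5))^{2k-2}. -/
theorem stmt8 (k : ℕ) (hk : 2 ≤ k) (ζ : ℝ) (hζ : 0 < ζ)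
    (m : Matrix (Fin (2 * k - 1)) (Fin k) ℝ)
    (hm : ∀ i j, m i j ∈ Set.Icc (0 : ℝ) 1)
    (hsep : ∀ i, ∀ j j' : Fin k, j ≠ j' → ζ ≤ |m i j - m i j'|)
    (S T : Finset (Fin (2 * k - 1))) (hST : Disjoint S T)
    (hS : S.card = k - 1) (hT : T.card = k - 1) :
    ((1 / (k : ℝ)) / k) * (ζ / (2 * Real.sqrt 5)) ^ (2 * k - 2) <
      sval (Matrix.of fun (A : {A : Finset (Fin (2 * k - 1)) // A ⊆ S})
          (B : {B : Finset (Fin (2 * k - 1)) // B ⊆ T}) =>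
        ∑ j : Fin k, (1 / (k : ℝ)) * ∏ i ∈ A.1 ∪ B.1, m i j) k := by
  have hk1 : 1 ≤ k := by omega
  have hkR : (0:ℝ) < k := by exact_mod_cast (by omega : 0 < k)
  set c : ℝ := (ζ^2/2)^(k-1) / k with hc
  have hc0 : 0 < c := by positivity
  set C : Matrix {A : Finset (Fin (2 * k - 1)) // A ⊆ S} {B : Finset (Fin (2 * k - 1)) // B ⊆ T} ℝ :=
    Matrix.of fun A B => ∑ j : Fin k, (1 / (k : ℝ)) * ∏ i ∈ A.1 ∪ B.1, m i j with hCdef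
  -- key lower bound for any set of k-1 rows
  have keyfor : ∀ (U : Finset (Fin (2 * k - 1))), U.card = k - 1 → ∀ z : Fin k → ℝ,
      c * ∑ j, z j ^ 2 ≤ ∑ A ∈ U.powerset, (∑ j, z j * ∏ i ∈ A, m i j) ^ 2 := by
    intro U hU z
    have hlem := lemA m ζ hζ hm (k-1) U Finset.univ z hU
      (by simp only [Finset.card_univ, Fintype.card_fin]; omega)
      (fun i _ j _ j' _ hne => hsep i j j' hne)
      (fun j hj => absurd (Finset.mem_univ j) hj)
    have hcast : ((k-1:ℕ):ℝ) + 1 = (k:ℝ) := by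
      push_cast [Nat.cast_sub hk1]
      ring
    rw [hcast] at hlem
    exact hlem
  -- key bounds in subtype-sum form
  have subsumS : ∀ (f : Finset (Fin (2 * k - 1)) → ℝ),
      ∑ A ∈ S.powerset, f A = ∑ A : {A : Finset (Fin (2 * k - 1)) // A ⊆ S}, f A.1 :=
    fun f => Finset.sum_subtype S.powerset (fun A => Finset.mem_powerset) f
  have subsumT : ∀ (f : Finset (Fin (2 * k - 1)) → ℝ),
      ∑ B ∈ T.powerset, f B = ∑ B : {B : Finset (Fin (2 * k - 1)) // B ⊆ T}, f B.1 :=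
    fun f => Finset.sum_subtype T.powerset (fun B => Finset.mem_powerset) f
  have keyS : ∀ z : Fin k → ℝ, c * ∑ j, z j ^ 2 ≤
      ∑ A : {A : Finset (Fin (2 * k - 1)) // A ⊆ S}, (∑ j, z j * ∏ i ∈ A.1, m i j) ^ 2 := by
    intro z
    rw [← subsumS (fun A => (∑ j, z j * ∏ i ∈ A, m i j) ^ 2)]
    exact keyfor S hS z
  have keyT : ∀ z : Fin k → ℝ, c * ∑ j, z j ^ 2 ≤
      ∑ B : {B : Finset (Fin (2 * k - 1)) // B ⊆ T}, (∑ j, z j * ∏ i ∈ B.1, m i j) ^ 2 := by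
    intro z
    rw [← subsumT (fun B => (∑ j, z j * ∏ i ∈ B, m i j) ^ 2)]
    exact keyfor T hT z
  -- the linear map y ↦ H_T y
  set HT : Matrix {B : Finset (Fin (2 * k - 1)) // B ⊆ T} (Fin k) ℝ :=
    Matrix.of fun B j => ∏ i ∈ B.1, m i j with hHT
  set L := HT.mulVecLin with hL
  have hLapp : ∀ y B, L y B = ∑ j, y j * ∏ i ∈ B.1, m i j := by
    intro y B
    rw [hL, Matrix.mulVecLin_apply, Matrix.mulVec, dotProduct]
    apply Finset.sum_congr rfl
    intro j _
    rw [hHT]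
    simp [mul_comm]
  have hLnorm : ∀ y, ∑ B, (L y B) ^ 2 = ∑ B : {B : Finset (Fin (2 * k - 1)) // B ⊆ T},
      (∑ j, y j * ∏ i ∈ B.1, m i j) ^ 2 := by
    intro y; apply Finset.sum_congr rfl; intro B _; rw [hLapp]
  have hker : LinearMap.ker L = ⊥ := by
    rw [LinearMap.ker_eq_bot]
    intro y₁ y₂ h12
    have h0 : L (y₁ - y₂) = 0 := by rw [map_sub, h12, sub_self]
    have hy : y₁ - y₂ = 0 := by
      have hkey := keyT (y₁ - y₂)
      rw [← hLnorm (y₁ - y₂), h0] at hkey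
      simp only [Pi.zero_apply, ne_eq, OfNat.ofNat_ne_zero, not_false_eq_true, zero_pow,
        Finset.sum_const_zero] at hkey
      have hsum : ∑ j, (y₁ - y₂) j ^ 2 = 0 := le_antisymm (by nlinarith [sum_sq_nonneg' (y₁ - y₂)])
        (sum_sq_nonneg' (y₁ - y₂))
      funext j
      have := (Finset.sum_eq_zero_iff_of_nonneg (fun i _ => sq_nonneg ((y₁-y₂) i))).1 hsum j
        (Finset.mem_univ j)
      have := sq_eq_zero_iff.1 this
      simpa using this
    exact sub_eq_zero.1 hy
  set V₀ := LinearMap.range L with hV₀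
  have hrank : Module.finrank ℝ V₀ = k := by
    have h := LinearMap.finrank_range_add_finrank_ker L
    rw [hker, finrank_bot, Module.finrank_fintype_fun_eq_card, Fintype.card_fin] at h
    rw [hV₀]
    omega
  -- C mulVec in terms of H_S and g
  have hCx : ∀ x : {B : Finset (Fin (2 * k - 1)) // B ⊆ T} → ℝ, ∀ A,
      C.mulVec x A = ∑ j, ((1/(k:ℝ)) * ∑ B, x B * ∏ i ∈ B.1, m i j) * ∏ i ∈ A.1, m i j := by
    intro x A
    rw [Matrix.mulVec, dotProduct]
    have h1 : ∀ B : {B : Finset (Fin (2 * k - 1)) // B ⊆ T},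
        C A B * x B = ∑ j, (1/(k:ℝ)) * ((x B * ∏ i ∈ B.1, m i j) * ∏ i ∈ A.1, m i j) := by
      intro B
      rw [hCdef, Matrix.of_apply, Finset.sum_mul]
      apply Finset.sum_congr rfl
      intro j _
      rw [Finset.prod_union (hST.mono A.2 B.2)]
      ring
    rw [Finset.sum_congr rfl (fun B _ => h1 B), Finset.sum_comm]
    apply Finset.sum_congr rfl
    intro j _
    rw [Finset.mul_sum, Finset.sum_mul]
    apply Finset.sum_congr rfl
    intro B _
    ring
  -- main pointwise bound
  have main : ∀ x : {B : Finset (Fin (2 * k - 1)) // B ⊆ T} → ℝ,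
      x ∈ V₀ → e2 x = 1 → c / k ≤ e2 (C.mulVec x) := by
    intro x hxV hx1
    obtain ⟨y, hy⟩ := hxV
    have hx2 : ∑ B, x B ^ 2 = 1 := by
      have := e2_sq x
      rw [hx1] at this
      linarith [this.symm]
    set g : Fin k → ℝ := fun j => ∑ B, x B * ∏ i ∈ B.1, m i j with hg
    have hgy : ∑ j, g j * y j = 1 := by
      have h1 : ∑ j, g j * y j = ∑ B, x B * (L y B) := by
        have hpt : ∀ j, g j * y j = ∑ B, (x B * ∏ i ∈ B.1, m i j) * y j := by
          intro j; rw [hg, Finset.sum_mul]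
        rw [Finset.sum_congr rfl (fun j _ => hpt j), Finset.sum_comm]
        apply Finset.sum_congr rfl
        intro B _
        rw [hLapp, Finset.mul_sum]
        apply Finset.sum_congr rfl
        intro j _
        ring
      rw [h1, hy]
      calc ∑ B, x B * x B = ∑ B, x B ^ 2 := by apply Finset.sum_congr rfl; intro B _; ring
        _ = 1 := hx2
    have hCS : (1:ℝ) ≤ (∑ j, g j ^ 2) * (∑ j, y j ^ 2) := by
      have := Finset.sum_mul_sq_le_sq_mul_sq Finset.univ g y
      rw [hgy] at this
      simpa using this
    have hyb : c * ∑ j, y j ^ 2 ≤ 1 := by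
      have := keyT y
      rw [← hLnorm y, hy] at this
      calc c * ∑ j, y j ^ 2 ≤ ∑ B, (x B) ^ 2 := this
        _ = 1 := hx2
    have hgsq : c ≤ ∑ j, g j ^ 2 := by
      have hP : (0:ℝ) ≤ ∑ j, g j ^ 2 := sum_sq_nonneg' g
      have hQ : (0:ℝ) ≤ ∑ j, y j ^ 2 := sum_sq_nonneg' y
      have hQle : ∑ j, y j ^ 2 ≤ 1 / c := by
        rw [le_div_iff₀ hc0]
        linarith [hyb]
      have h2 : (∑ j, g j ^ 2) * (∑ j, y j ^ 2) ≤ (∑ j, g j ^ 2) * (1/c) :=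
        mul_le_mul_of_nonneg_left hQle hP
      have h3 : (1:ℝ) ≤ (∑ j, g j ^ 2) * (1/c) := le_trans hCS h2
      rw [mul_one_div, le_div_iff₀ hc0] at h3
      linarith
    -- conclude
    apply le_e2 (by positivity)
    have hCxsq : ∑ A, (C.mulVec x A) ^ 2 =
        ∑ A : {A : Finset (Fin (2 * k - 1)) // A ⊆ S},
          (∑ j, ((1/(k:ℝ)) * g j) * ∏ i ∈ A.1, m i j) ^ 2 := by
      apply Finset.sum_congr rfl
      intro A _
      rw [hCx x A]
    rw [hCxsq]
    have h5 := keyS (fun j => (1/(k:ℝ)) * g j)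
    have h6 : ∑ j, ((1/(k:ℝ)) * g j) ^ 2 = (1/(k:ℝ))^2 * ∑ j, g j ^ 2 := by
      rw [Finset.mul_sum]; apply Finset.sum_congr rfl; intro j _; ring
    have h7 : (c/k)^2 ≤ c * ((1/(k:ℝ))^2 * ∑ j, g j ^ 2) := by
      have he1 : (c/k)^2 = c * c / (k:ℝ)^2 := by ring
      have he2 : c * ((1/(k:ℝ))^2 * ∑ j, g j ^ 2) = c * (∑ j, g j ^ 2) / (k:ℝ)^2 := by ring
      rw [he1, he2]
      gcongr
    calc (c/k)^2 ≤ c * ((1/(k:ℝ))^2 * ∑ j, g j ^ 2) := h7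
      _ = c * ∑ j, ((1/(k:ℝ)) * g j) ^ 2 := by rw [h6]
      _ ≤ _ := h5
  -- a unit vector in V₀
  have hV₀ne : V₀ ≠ ⊥ := by
    intro h
    rw [h, finrank_bot] at hrank
    omega
  obtain ⟨x₁, hx₁V, hx₁0⟩ := (Submodule.ne_bot_iff V₀).1 hV₀ne
  have he2pos : 0 < e2 x₁ := by
    rcases lt_or_eq_of_le (e2_nonneg x₁) with h | h
    · exact h
    · exact absurd (e2_eq_zero h.symm) hx₁0
  set xu := (e2 x₁)⁻¹ • x₁ with hxu
  have hxuV : xu ∈ V₀ := Submodule.smul_mem _ _ hx₁V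
  have hxu1 : e2 xu = 1 := by
    rw [hxu, e2_smul, abs_of_pos (by positivity), inv_mul_cancel₀ (ne_of_gt he2pos)]
  haveI hne : Nonempty {x : {B : Finset (Fin (2 * k - 1)) // B ⊆ T} → ℝ //
      x ∈ (⟨V₀, hrank⟩ : {V : Submodule ℝ ({B : Finset (Fin (2 * k - 1)) // B ⊆ T} → ℝ) //
        Module.finrank ℝ V = k}).1 ∧ e2 x = 1} := ⟨⟨xu, hxuV, hxu1⟩⟩
  -- upper bound for BddAbove
  set M : ℝ := Real.sqrt (∑ A, ∑ B, (C A B)^2) with hM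
  have hub : ∀ V : {V : Submodule ℝ ({B : Finset (Fin (2 * k - 1)) // B ⊆ T} → ℝ) //
      Module.finrank ℝ V = k},
      (⨅ x : {x // x ∈ V.1 ∧ e2 x = 1}, e2 (C.mulVec x.1)) ≤ M := by
    intro V
    by_cases h : Nonempty {x : {B : Finset (Fin (2 * k - 1)) // B ⊆ T} → ℝ //
        x ∈ V.1 ∧ e2 x = 1}
    · obtain ⟨x₀⟩ := h
      apply ciInf_le_of_le ⟨0, by rintro _ ⟨z, rfl⟩; exact e2_nonneg _⟩ x₀
      have hx₀2 : ∑ B, x₀.1 B ^ 2 = 1 := by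
        have := e2_sq x₀.1
        rw [x₀.2.2] at this
        linarith [this.symm]
      have hbd : ∑ A, (C.mulVec x₀.1 A) ^ 2 ≤ ∑ A, ∑ B, (C A B)^2 := by
        apply Finset.sum_le_sum
        intro A _
        rw [Matrix.mulVec, dotProduct]
        calc (∑ B, C A B * x₀.1 B) ^ 2 ≤ (∑ B, (C A B)^2) * (∑ B, x₀.1 B ^ 2) :=
              Finset.sum_mul_sq_le_sq_mul_sq Finset.univ _ _
          _ = ∑ B, (C A B)^2 := by rw [hx₀2, mul_one]
      calc e2 (C.mulVec x₀.1) = Real.sqrt (∑ A, (C.mulVec x₀.1 A) ^ 2) := rfl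
        _ ≤ M := Real.sqrt_le_sqrt hbd
    · rw [not_nonempty_iff] at h
      rw [Real.iInf_of_isEmpty]
      exact Real.sqrt_nonneg _
  -- assemble
  have hsv : c / k ≤ sval C k := by
    have h1 : c / k ≤ ⨅ x : {x // x ∈ (⟨V₀, hrank⟩ : {V : Submodule ℝ
        ({B : Finset (Fin (2 * k - 1)) // B ⊆ T} → ℝ) // Module.finrank ℝ V = k}).1 ∧ e2 x = 1},
        e2 (C.mulVec x.1) := le_ciInf (fun x => main x.1 x.2.1 x.2.2)
    have h2 := le_ciSup (f := fun V : {V : Submodule ℝ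
        ({B : Finset (Fin (2 * k - 1)) // B ⊆ T} → ℝ) // Module.finrank ℝ V = k} =>
        ⨅ x : {x // x ∈ V.1 ∧ e2 x = 1}, e2 (C.mulVec x.1))
      ⟨M, by rintro _ ⟨V, rfl⟩; exact hub V⟩ ⟨V₀, hrank⟩
    exact le_trans h1 h2
  -- final arithmetic
  have hpow : (ζ / (2*Real.sqrt 5)) ^ (2*k-2) = (ζ^2/20)^(k-1) := by
    have h5 : (2*Real.sqrt 5)^2 = 20 := by
      rw [mul_pow, Real.sq_sqrt (by norm_num : (5:ℝ) ≥ 0)]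
      norm_num
    have hee : 2*k-2 = 2*(k-1) := by omega
    rw [hee, pow_mul, div_pow, h5]
  have harith : ((1 / (k:ℝ)) / k) * (ζ / (2*Real.sqrt 5)) ^ (2*k-2) < c / k := by
    rw [hpow]
    have hlt : (ζ^2/20)^(k-1) < (ζ^2/2)^(k-1) := by
      apply pow_lt_pow_left₀ _ (by positivity) (by omega)
      have : (0:ℝ) < ζ^2 := by positivity
      linarith [div_lt_div_of_pos_left this (by norm_num : (0:ℝ) < 2) (by norm_num : (2:ℝ) < 20)]
    have heq : c / k = ((1 / (k:ℝ)) / k) * (ζ^2/2)^(k-1) := by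
      rw [hc]
      field_simp
    rw [heq]
    apply mul_lt_mul_of_pos_left hlt (by positivity)
  exact lt_of_lt_of_le harith hsv
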